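/- Let k be a perfect field, K a finitely generated field extension of k, and k′ the algebraic closure of k in K. Fix an algebraic closure Ω of K and let κ ⊆ Ω be a finite Galois extension of k′. Then the compositum K·κ inside Ω is a finite Galois extension of K of degree [κ : k′], and the restriction homomorphism Gal(K·κ/K) → Gal(κ/k′) is a group isomorphism. -/

import Mathlib

open IntermediateField Polynomial

set_option maxHeartbeats 1000000 in
set_option synthInstance.maxHeartbeats 400000 in
/-- Let `k` be a perfect field, `K` a finitely generated field extension of `k`, `k′` the
algebraic closure of `k` in `K`, and `Ω` an algebraic closure of `K`. Let `κ ⊆ Ω` be a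
finite Galois extension of `k′`. Then the compositum `K·κ` inside `Ω` is a finite Galois
extension of `K` of degree `[κ : k′]`, and the restriction homomorphism
`Gal(K·κ/K) → Gal(κ/k′)` is a group isomorphism. -/
theorem compositum_galois_of_constant_extension
    {k Ω : Type*} [Field k] [PerfectField k] [Field Ω] [Algebra k Ω]
    (K : IntermediateField k Ω)
    (hfg : ∃ s : Finset Ω, IntermediateField.adjoin k (s : Set Ω) = K)
    [IsAlgClosed Ω] [Algebra.IsAlgebraic ↥K Ω]
    (k' : IntermediateField k Ω)
    (hk' : ∀ x : Ω, x ∈ k' ↔ x ∈ K ∧ IsAlgebraic k x)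
    (κ : IntermediateField ↥k' Ω) [FiniteDimensional ↥k' ↥κ] [IsGalois ↥k' ↥κ]
    (L' : IntermediateField ↥K Ω)
    (hL' : L' = IntermediateField.extendScalars
      (le_sup_left : K ≤ K ⊔ IntermediateField.restrictScalars k κ)) :
    IsGalois ↥K ↥L' ∧ FiniteDimensional ↥K ↥L' ∧
      Module.finrank ↥K ↥L' = Module.finrank ↥k' ↥κ ∧
      ∃ res : (↥L' ≃ₐ[↥K] ↥L') →* (↥κ ≃ₐ[↥k'] ↥κ),
        (∀ σ (x : Ω) (hx : x ∈ κ) (hx' : x ∈ L'),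
          (↑(res σ ⟨x, hx⟩) : Ω) = ↑(σ ⟨x, hx'⟩)) ∧
        Function.Bijective res := by
  classical
  have hsub : k' ≤ K := fun x hx => ((hk' x).1 hx).1
  -- primitive element for κ/k'
  haveI : Algebra.IsSeparable ↥k' ↥κ := IsGalois.to_isSeparable
  obtain ⟨a, ha⟩ := Field.exists_primitive_element ↥k' ↥κ
  set α : Ω := (a : Ω) with hαdef
  have hακ : α ∈ κ := a.2
  have hκα : IntermediateField.adjoin ↥k' {α} = κ := by
    have h2 := congrArg (IntermediateField.map κ.val) ha
    rwa [IntermediateField.adjoin_map, Set.image_singleton, ← AlgHom.fieldRange_eq_map,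
      IntermediateField.fieldRange_val] at h2
  -- the compositum is K⟮α⟯
  have hsup : K ⊔ IntermediateField.restrictScalars k κ
      = IntermediateField.restrictScalars k (IntermediateField.adjoin ↥K {α}) := by
    rw [← hκα, IntermediateField.restrictScalars_adjoin_eq_sup,
      IntermediateField.restrictScalars_adjoin_eq_sup, ← sup_assoc, sup_eq_left.2 hsub]
  have hLα : L' = IntermediateField.adjoin ↥K {α} := by
    rw [hL']
    apply IntermediateField.restrictScalars_injective k
    rw [IntermediateField.extendScalars_restrictScalars, hsup]
  subst hLα
  have hmemαL : ∀ x : Ω, x ∈ κ → x ∈ IntermediateField.adjoin ↥K {α} := by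
    intro x hx
    have hx2 : x ∈ K ⊔ IntermediateField.restrictScalars k κ :=
      (le_sup_right : IntermediateField.restrictScalars k κ ≤ _) hx
    rw [hsup] at hx2
    exact hx2
  have hαL : α ∈ IntermediateField.adjoin ↥K {α} := hmemαL α hακ
  -- the minimal polynomial of α over k'
  haveI : Algebra.IsIntegral ↥k' ↥κ := Algebra.IsIntegral.of_finite _ _
  set f : Polynomial ↥k' := minpoly ↥k' α with hfdef
  have hfa : f = minpoly ↥k' a := minpoly.algHom_eq κ.val (fun _ _ h => Subtype.ext h) a
  have hαint : IsIntegral ↥k' α := by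
    have := (Algebra.IsIntegral.isIntegral (R := ↥k') a).map κ.val
    exact this
  have hfmonic : f.Monic := minpoly.monic hαint
  have hfsep : f.Separable := by
    rw [hfa]; exact Algebra.IsSeparable.isSeparable ↥k' a
  have hfsplitsκ : (f.map (algebraMap ↥k' ↥κ)).Splits := by
    rw [hfa]; exact Normal.splits inferInstance a
  set fΩ : Polynomial Ω := f.map (algebraMap ↥k' Ω) with hfΩdef
  have hfΩeq : fΩ = (f.map (algebraMap ↥k' ↥κ)).map (algebraMap ↥κ Ω) := by
    rw [Polynomial.map_map, ← IsScalarTower.algebraMap_eq]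
  have hfΩne : fΩ ≠ 0 := by
    apply Polynomial.map_ne_zero hfmonic.ne_zero
  have hroots : ∀ r ∈ fΩ.roots, r ∈ κ := by
    intro r hr
    rw [hfΩeq, hfsplitsκ.roots_map_of_injective (algebraMap ↥κ Ω).injective] at hr
    obtain ⟨s, _, rfl⟩ := Multiset.mem_map.1 hr
    exact s.2
  -- the minimal polynomial of α over K
  set ι : ↥k' →+* ↥K := (IntermediateField.inclusion hsub).toRingHom with hιdef
  have hcomp : (algebraMap ↥K Ω).comp ι = algebraMap ↥k' Ω := by
    ext x; rfl
  set p : Polynomial ↥K := f.map ι with hpdef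
  have hp0 : Polynomial.aeval α p = 0 := by
    rw [hpdef, Polynomial.aeval_def, Polynomial.eval₂_map, hcomp, ← Polynomial.aeval_def,
      minpoly.aeval]
  have hpmonic : p.Monic := hfmonic.map ι
  have hαintK : IsIntegral ↥K α := ⟨p, hpmonic, hp0⟩
  set g : Polynomial ↥K := minpoly ↥K α with hgdef
  have hgdvd : g ∣ p := minpoly.dvd _ _ hp0
  have hgmonic : g.Monic := minpoly.monic hαintK
  set gΩ : Polynomial Ω := g.map (algebraMap ↥K Ω) with hgΩdef
  have hgΩmonic : gΩ.Monic := hgmonic.map _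
  have hgΩdvd : gΩ ∣ fΩ := by
    have := Polynomial.map_dvd (algebraMap ↥K Ω) hgdvd
    rwa [hpdef, Polynomial.map_map, hcomp] at this
  have hgroots : ∀ r ∈ gΩ.roots, r ∈ κ := fun r hr =>
    hroots r (Multiset.mem_of_le (Polynomial.roots.le_of_dvd hfΩne hgΩdvd) hr)
  have hgsplits : gΩ.Splits := IsAlgClosed.splits gΩ
  have hliftκ : gΩ ∈ Polynomial.lifts (algebraMap ↥κ Ω) :=
    hgsplits.mem_lift_of_roots_mem_range hgΩmonic (algebraMap ↥κ Ω)
      (fun r hr => ⟨⟨r, hgroots r hr⟩, rfl⟩)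
  haveI : Algebra.IsIntegral k ↥k' :=
    ⟨fun b => ((IntermediateField.isAlgebraic_iff.2 ((hk' ↑b).1 b.2).2)).isIntegral⟩
  have hcoeff : ∀ n, gΩ.coeff n ∈ k' := by
    intro n
    obtain ⟨c, hc⟩ := (Polynomial.lifts_iff_coeff_lifts _).1 hliftκ n
    have hcκ : gΩ.coeff n ∈ κ := by rw [← hc]; exact c.2
    have h1 : gΩ.coeff n ∈ K := by
      rw [hgΩdef, Polynomial.coeff_map]; exact (g.coeff n).2
    have h2 : IsIntegral ↥k' (gΩ.coeff n) := by
      have := (Algebra.IsIntegral.isIntegral (R := ↥k') (⟨gΩ.coeff n, hcκ⟩ : ↥κ)).map κ.val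
      exact this
    exact (hk' _).2 ⟨h1, (isIntegral_trans _ h2).isAlgebraic⟩
  have hliftk' : gΩ ∈ Polynomial.lifts (algebraMap ↥k' Ω) :=
    (Polynomial.lifts_iff_coeff_lifts _).2 fun n => ⟨⟨_, hcoeff n⟩, rfl⟩
  obtain ⟨g₀, hg₀map, hg₀deg, hg₀monic⟩ :=
    Polynomial.lifts_and_degree_eq_and_monic hliftk' hgΩmonic
  have hg₀aeval : Polynomial.aeval α g₀ = 0 := by
    rw [Polynomial.aeval_def, Polynomial.eval₂_eq_eval_map, hg₀map, hgΩdef,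
      ← Polynomial.eval₂_eq_eval_map, ← Polynomial.aeval_def, minpoly.aeval]
  have hfdvd : f ∣ g₀ := minpoly.dvd _ _ hg₀aeval
  have hdeg : g.natDegree = f.natDegree := by
    apply le_antisymm
    · have h1 : g.natDegree ≤ p.natDegree :=
        Polynomial.natDegree_le_of_dvd hgdvd hpmonic.ne_zero
      rwa [hpdef, Polynomial.natDegree_map] at h1
    · have h1 : f.natDegree ≤ g₀.natDegree :=
        Polynomial.natDegree_le_of_dvd hfdvd hg₀monic.ne_zero
      have h2 : g₀.natDegree = gΩ.natDegree := Polynomial.natDegree_eq_of_degree_eq hg₀deg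
      rwa [h2, hgΩdef, Polynomial.natDegree_map] at h1
  -- finrank computations
  have hfinκ : Module.finrank ↥k' ↥κ = f.natDegree := by
    rw [← hκα]; exact IntermediateField.adjoin.finrank hαint
  have hfinL : Module.finrank ↥K ↥(IntermediateField.adjoin ↥K {α}) = f.natDegree := by
    rw [IntermediateField.adjoin.finrank hαintK, hdeg]
  -- Galois
  have hpsep : p.Separable := hfsep.map
  have hpsplits : (p.map (algebraMap ↥K Ω)).Splits := IsAlgClosed.splits _
  have hpmapeq : p.map (algebraMap ↥K Ω) = fΩ := by
    rw [hpdef, Polynomial.map_map, hcomp]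
  have hadj : IntermediateField.adjoin ↥K (p.rootSet Ω) = IntermediateField.adjoin ↥K {α} := by
    apply le_antisymm
    · rw [IntermediateField.adjoin_le_iff]
      intro r hr
      have hrκ : r ∈ κ := by
        apply hroots
        rw [← hpmapeq]
        exact (Polynomial.mem_roots_iff_aeval_eq_zero (by
          rw [hpmapeq]; exact hfΩne)).2 (by
            have := (Polynomial.mem_rootSet.1 hr).2
            rwa [Polynomial.aeval_def, Polynomial.eval₂_eq_eval_map, ← Polynomial.coe_aeval_eq_eval,
              Polynomial.aeval_def] at this)
      exact hmemαL r hrκ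
    · rw [IntermediateField.adjoin_le_iff, Set.singleton_subset_iff]
      apply IntermediateField.subset_adjoin
      rw [Polynomial.mem_rootSet]
      exact ⟨hpmonic.ne_zero, hp0⟩
  haveI hGal : IsGalois ↥K ↥(IntermediateField.adjoin ↥K {α}) := by
    haveI : Polynomial.IsSplittingField ↥K ↥(IntermediateField.adjoin ↥K {α}) p :=
      hadj ▸ IntermediateField.adjoin_rootSet_isSplittingField hpsplits
    exact IsGalois.of_separable_splitting_field hpsep
  haveI hFD : FiniteDimensional ↥K ↥(IntermediateField.adjoin ↥K {α}) :=
    IntermediateField.adjoin.finiteDimensional hαintK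
  refine ⟨hGal, hFD, by rw [hfinL, hfinκ], ?_⟩
  -- construct the restriction homomorphism
  haveI : IsAlgClosure ↥K Ω := ⟨inferInstance, inferInstance⟩
  let down : (Ω ≃ₐ[↥K] Ω) → (Ω ≃ₐ[↥k'] Ω) := fun θ =>
    AlgEquiv.ofRingEquiv (f := θ.toRingEquiv) (fun c => θ.commutes ⟨↑c, hsub c.2⟩)
  let resf : (↥(IntermediateField.adjoin ↥K {α}) ≃ₐ[↥K] ↥(IntermediateField.adjoin ↥K {α})) →
      (↥κ ≃ₐ[↥k'] ↥κ) := fun σ =>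
    AlgEquiv.restrictNormalHom (F := ↥k') (K₁ := Ω) ↥κ (down (σ.liftNormal Ω))
  have key : ∀ σ (x : Ω) (hx : x ∈ κ) (hx' : x ∈ IntermediateField.adjoin ↥K {α}),
      (↑(resf σ ⟨x, hx⟩) : Ω) = ↑(σ ⟨x, hx'⟩) := by
    intro σ x hx hx'
    have h1 : (↑(resf σ ⟨x, hx⟩) : Ω) = (down (σ.liftNormal Ω)) x :=
      AlgEquiv.restrictNormalHom_apply κ (down (σ.liftNormal Ω)) ⟨x, hx⟩
    have h3 : σ.liftNormal Ω x = ↑(σ ⟨x, hx'⟩) :=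
      AlgEquiv.liftNormal_commutes σ Ω (⟨x, hx'⟩ : ↥(IntermediateField.adjoin ↥K {α}))
    rw [h1]
    exact h3
  have hmul : ∀ σ τ, resf (σ * τ) = resf σ * resf τ := by
    intro σ τ
    apply AlgEquiv.ext
    intro x
    apply Subtype.val_injective
    have hxL := hmemαL ↑x x.2
    have h1 : (↑(resf (σ * τ) ⟨↑x, x.2⟩) : Ω) = ↑((σ * τ) ⟨↑x, hxL⟩) := key _ ↑x x.2 hxL
    have h2 : (↑(resf τ ⟨↑x, x.2⟩) : Ω) = ↑(τ ⟨↑x, hxL⟩) := key _ ↑x x.2 hxL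
    have h3 : (↑(resf σ ⟨↑(resf τ x), (resf τ x).2⟩) : Ω) = ↑(σ ⟨↑(resf τ x), hmemαL _ (resf τ x).2⟩) :=
      key _ _ _ _
    calc (↑(resf (σ * τ) x) : Ω) = ↑((σ * τ) ⟨↑x, hxL⟩) := h1
      _ = ↑(σ (τ ⟨↑x, hxL⟩)) := rfl
      _ = ↑(σ ⟨↑(resf τ x), hmemαL _ (resf τ x).2⟩) := by
          congr 1
          apply congrArg σ
          apply Subtype.val_injective
          exact h2.symm
      _ = ↑(resf σ ⟨↑(resf τ x), (resf τ x).2⟩) := h3.symm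
      _ = ↑((resf σ * resf τ) x) := rfl
  refine ⟨MonoidHom.mk' resf hmul, key, ?_⟩
  have hinj : Function.Injective (MonoidHom.mk' resf hmul) := by
    intro σ τ h
    have hgen : σ ⟨α, hαL⟩ = τ ⟨α, hαL⟩ := by
      apply Subtype.val_injective
      have h' : resf σ = resf τ := h
      rw [← key σ α hακ hαL, ← key τ α hακ hαL, h']
    have hhom : σ.toAlgHom = τ.toAlgHom := by
      apply PowerBasis.algHom_ext (IntermediateField.adjoin.powerBasis hαintK)
      have hg : (IntermediateField.adjoin.powerBasis hαintK).gen = ⟨α, hαL⟩ := rfl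
      rw [hg]
      exact hgen
    exact AlgEquiv.ext fun x => congrFun (congrArg (↑·) hhom) x
  refine (Fintype.bijective_iff_injective_and_card _).2 ⟨hinj, ?_⟩
  rw [← Nat.card_eq_fintype_card, ← Nat.card_eq_fintype_card, IsGalois.card_aut_eq_finrank, IsGalois.card_aut_eq_finrank, hfinL, hfinκ]
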